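/- Let n ≥ 2 and ε, φ ∈ ℝ with |ε| > 1 and |φ| > 1. Then at least n − 2 of the n eigenvalues of T_{n,ε,φ} belong to the interval [−2, 2]; that is, T_{n,ε,φ} has at most two eigenvalues outside [−2, 2]. -/

import Mathlib

open Matrix Real Filter

/-- The n×n tridiagonal matrix `T_{n,ε,φ}` with `(T)_{11} = ε`, `(T)_{nn} = φ`,
zero elsewhere on the diagonal, and ones on the first super- and subdiagonals. -/
noncomputable def Ttri (n : ℕ) (e f : ℝ) : Matrix (Fin n) (Fin n) ℝ :=
  fun i j =>
    if i = j then (if (i : ℕ) = 0 then e else if (i : ℕ) = n - 1 then f else 0)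
    else if (i : ℕ) + 1 = (j : ℕ) ∨ (j : ℕ) + 1 = (i : ℕ) then 1 else 0

lemma Ttri_apply (m : ℕ) (e f : ℝ) (i j : Fin (m+2)) :
    Ttri (m+2) e f i j =
      (if i = 0 ∧ j = 0 then e else 0) +
      (if i = Fin.last (m+1) ∧ j = Fin.last (m+1) then f else 0) +
      (if (i:ℕ)+1 = (j:ℕ) then 1 else 0) +
      (if (j:ℕ)+1 = (i:ℕ) then 1 else 0) := by
  have hi := i.isLt; have hj := j.isLt
  simp only [Ttri, Fin.ext_iff, Fin.val_zero, Fin.val_last]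
  split_ifs <;> first | ring1 | (exfalso; omega)

lemma quadform (m : ℕ) (e f : ℝ) (x : Fin (m+2) → ℝ) :
    x ⬝ᵥ (Ttri (m+2) e f *ᵥ x) =
      e * x 0 ^ 2 + f * x (Fin.last (m+1)) ^ 2 +
      2 * ∑ i : Fin (m+1), x i.castSucc * x i.succ := by
  have key : x ⬝ᵥ (Ttri (m+2) e f *ᵥ x)
      = ∑ i : Fin (m+2), ∑ j : Fin (m+2), x i * (Ttri (m+2) e f i j * x j) := by
    simp [dotProduct, mulVec, Finset.mul_sum]
  have expand : ∀ i j : Fin (m+2), x i * (Ttri (m+2) e f i j * x j) =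
      (if i = 0 then (if j = 0 then e * (x i * x j) else 0) else 0) +
      ((if i = Fin.last (m+1) then (if j = Fin.last (m+1) then f * (x i * x j) else 0) else 0) +
      ((if (i:ℕ)+1 = (j:ℕ) then x i * x j else 0) +
      (if (j:ℕ)+1 = (i:ℕ) then x i * x j else 0))) := by
    intro i j
    have hi := i.isLt; have hj := j.isLt
    rw [Ttri_apply]
    simp only [Fin.ext_iff, Fin.val_zero, Fin.val_last]
    split_ifs <;> first | ring1 | (exfalso; omega)
  have e1 : ∑ i : Fin (m+2), ∑ j : Fin (m+2),
      (if i = 0 then (if j = 0 then e * (x i * x j) else 0) else 0) = e * x 0 ^ 2 := by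
    simp [Finset.sum_ite_eq', sq]
  have e2 : ∑ i : Fin (m+2), ∑ j : Fin (m+2),
      (if i = Fin.last (m+1) then (if j = Fin.last (m+1) then f * (x i * x j) else 0) else 0)
      = f * x (Fin.last (m+1)) ^ 2 := by
    simp [Finset.sum_ite_eq', sq]
  have h3 : ∑ i : Fin (m+2), ∑ j : Fin (m+2), (if (i:ℕ)+1 = (j:ℕ) then x i * x j else 0)
      = ∑ k : Fin (m+1), x k.castSucc * x k.succ := by
    rw [Fin.sum_univ_castSucc]
    have hlast : ∑ j : Fin (m+2), (if ((Fin.last (m+1) : Fin (m+2)):ℕ)+1 = (j:ℕ) then x (Fin.last (m+1)) * x j else 0) = 0 := by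
      apply Finset.sum_eq_zero
      intro j _
      have := j.isLt
      rw [if_neg]
      simp only [Fin.val_last]
      omega
    rw [hlast, add_zero]
    apply Finset.sum_congr rfl
    intro k _
    have hiff : ∀ j : Fin (m+2), ((k.castSucc : ℕ)+1 = (j:ℕ)) ↔ j = k.succ := by
      intro j
      rw [Fin.ext_iff]
      simp only [Fin.coe_castSucc, Fin.val_succ]
      omega
    calc ∑ j : Fin (m+2), (if ((k.castSucc:ℕ))+1 = (j:ℕ) then x k.castSucc * x j else 0)
        = ∑ j : Fin (m+2), (if j = k.succ then x k.castSucc * x j else 0) := by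
          apply Finset.sum_congr rfl; intro j _; rw [if_congr (hiff j) rfl rfl]
      _ = x k.castSucc * x k.succ := by simp
  have h4 : ∑ i : Fin (m+2), ∑ j : Fin (m+2), (if (j:ℕ)+1 = (i:ℕ) then x i * x j else 0)
      = ∑ k : Fin (m+1), x k.castSucc * x k.succ := by
    rw [Finset.sum_comm, ← h3]
    apply Finset.sum_congr rfl; intro i _
    apply Finset.sum_congr rfl; intro j _
    rw [if_congr Iff.rfl (mul_comm _ _) rfl]
  rw [key]
  simp only [expand, Finset.sum_add_distrib, e1, e2, h3, h4]
  ring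

section Aux
variable {m : ℕ} {e f : ℝ}

lemma sum_sq_castSucc (x : Fin (m+2) → ℝ) :
    ∑ i : Fin (m+1), x i.castSucc ^ 2 = (∑ i : Fin (m+2), x i ^ 2) - x (Fin.last (m+1)) ^ 2 := by
  rw [Fin.sum_univ_castSucc (f := fun i : Fin (m+2) => x i ^ 2)]; ring

lemma sum_sq_succ (x : Fin (m+2) → ℝ) :
    ∑ i : Fin (m+1), x i.succ ^ 2 = (∑ i : Fin (m+2), x i ^ 2) - x 0 ^ 2 := by
  rw [Fin.sum_univ_succ (f := fun i : Fin (m+2) => x i ^ 2)]; ring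

lemma star_identity (s : ℝ) (hs : s = 1 ∨ s = -1) (x : Fin (m+2) → ℝ) :
    2 * (∑ i : Fin (m+2), x i ^ 2) - s * (x ⬝ᵥ (Ttri (m+2) e f *ᵥ x)) =
      (1 - s*e) * x 0 ^ 2 + (1 - s*f) * x (Fin.last (m+1)) ^ 2 +
      ∑ i : Fin (m+1), (x i.castSucc - s * x i.succ) ^ 2 := by
  have hq := quadform m e f x
  have hs2 : s ^ 2 = 1 := by rcases hs with h | h <;> rw [h] <;> norm_num
  have hsq : ∑ i : Fin (m+1), (x i.castSucc - s * x i.succ) ^ 2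
      = (∑ i : Fin (m+1), x i.castSucc ^ 2) + (∑ i : Fin (m+1), x i.succ ^ 2)
        - 2 * s * ∑ i : Fin (m+1), x i.castSucc * x i.succ := by
    have hterm : ∀ i : Fin (m+1), (x i.castSucc - s * x i.succ) ^ 2
        = x i.castSucc ^ 2 + x i.succ ^ 2 - 2 * s * (x i.castSucc * x i.succ) := by
      intro i; linear_combination (x i.succ)^2 * hs2
    rw [Finset.sum_congr rfl (fun i _ => hterm i), Finset.sum_sub_distrib,
      Finset.sum_add_distrib, ← Finset.mul_sum]
  rw [hq, hsq, sum_sq_castSucc x, sum_sq_succ x]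
  ring

/-- The key quadratic-form inequality, sign-unified: `s = 1` bounds above, `s = -1` below. -/
lemma quad_lt (s : ℝ) (hs : s = 1 ∨ s = -1)
    (he : 1 < |e|) (hf : 1 < |f|) (x : Fin (m+2) → ℝ) (hx : x ≠ 0)
    (h0 : 1 < s * e → x 0 = 0) (hl : 1 < s * f → x (Fin.last (m+1)) = 0) :
    s * (x ⬝ᵥ (Ttri (m+2) e f *ᵥ x)) < 2 * ∑ i : Fin (m+2), x i ^ 2 := by
  have hid := star_identity (e := e) (f := f) s hs x
  have hse : 1 < |s * e| := by
    rcases hs with h | h <;> rw [h] <;> simpa [abs_mul] using he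
  have hsf : 1 < |s * f| := by
    rcases hs with h | h <;> rw [h] <;> simpa [abs_mul] using hf
  have ht1 : 0 ≤ (1 - s*e) * x 0 ^ 2 := by
    rcases lt_or_ge 1 (s*e) with h | h
    · rw [h0 h]; ring_nf; simp
    · nlinarith [sq_nonneg (x 0)]
  have ht2 : 0 ≤ (1 - s*f) * x (Fin.last (m+1)) ^ 2 := by
    rcases lt_or_ge 1 (s*f) with h | h
    · rw [hl h]; ring_nf; simp
    · nlinarith [sq_nonneg (x (Fin.last (m+1)))]
  have ht3 : 0 ≤ ∑ i : Fin (m+1), (x i.castSucc - s * x i.succ) ^ 2 :=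
    Finset.sum_nonneg fun i _ => sq_nonneg _
  have hpos : 0 < (1 - s*e) * x 0 ^ 2 + (1 - s*f) * x (Fin.last (m+1)) ^ 2 +
      ∑ i : Fin (m+1), (x i.castSucc - s * x i.succ) ^ 2 := by
    by_cases hconst : ∀ i : Fin (m+1), x i.castSucc = s * x i.succ
    · have hx0 : x 0 ≠ 0 := by
        intro h00
        apply hx
        have hall : ∀ i : Fin (m+2), x i = 0 := by
          intro i
          induction i using Fin.induction with
          | zero => exact h00
          | succ k ih =>
            have hk := hconst k
            rw [ih] at hk
            rcases hs with h | h <;> rw [h] at hk <;> linarith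
        funext i; exact hall i
      have hse3 : s * e < -1 := by
        rcases lt_or_ge 1 (s*e) with h | h
        · exact absurd (h0 h) hx0
        · rcases abs_cases (s*e) with ⟨h1, h2⟩ | ⟨h1, h2⟩ <;> linarith
      have h1 : 0 < (1 - s*e) * x 0 ^ 2 := by
        have hgt : (0:ℝ) < 1 - s*e := by linarith
        positivity
      linarith
    · push_neg at hconst
      obtain ⟨i0, hi0⟩ := hconst
      have hsum : 0 < ∑ i : Fin (m+1), (x i.castSucc - s * x i.succ) ^ 2 := by
        apply Finset.sum_pos' (fun i _ => sq_nonneg _)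
        refine ⟨i0, Finset.mem_univ _, ?_⟩
        have : x i0.castSucc - s * x i0.succ ≠ 0 := sub_ne_zero.mpr hi0
        positivity
      linarith
  linarith
end Aux


section DotHelpers
variable {n : ℕ}

lemma dot_sum_left (S : Finset (Fin n)) (a : Fin n → ℝ) (u : Fin n → (Fin n → ℝ)) (w : Fin n → ℝ) :
    (∑ k ∈ S, a k • u k) ⬝ᵥ w = ∑ k ∈ S, a k * (u k ⬝ᵥ w) := by
  simp only [dotProduct, Finset.sum_apply, Pi.smul_apply, smul_eq_mul, Finset.sum_mul,
    Finset.mul_sum]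
  rw [Finset.sum_comm]
  exact Finset.sum_congr rfl fun k _ => Finset.sum_congr rfl fun i _ => by ring

lemma dot_sum_right (S : Finset (Fin n)) (a : Fin n → ℝ) (u : Fin n → (Fin n → ℝ)) (w : Fin n → ℝ) :
    w ⬝ᵥ (∑ k ∈ S, a k • u k) = ∑ k ∈ S, a k * (w ⬝ᵥ u k) := by
  simp only [dotProduct, Finset.sum_apply, Pi.smul_apply, smul_eq_mul, Finset.mul_sum]
  rw [Finset.sum_comm]
  exact Finset.sum_congr rfl fun k _ => Finset.sum_congr rfl fun i _ => by ring

lemma mulVec_sum' (A : Matrix (Fin n) (Fin n) ℝ) (S : Finset (Fin n)) (c : Fin n → ℝ)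
    (v : Fin n → (Fin n → ℝ)) :
    A *ᵥ (∑ k ∈ S, c k • v k) = ∑ k ∈ S, c k • (A *ᵥ v k) := by
  induction S using Finset.induction with
  | empty => simp
  | @insert a s h ih =>
      rw [Finset.sum_insert h, Finset.sum_insert h, Matrix.mulVec_add, ih, Matrix.mulVec_smul]

lemma eigen_dot (A : Matrix (Fin n) (Fin n) ℝ) (hA : A.IsHermitian) (k l : Fin n) :
    (hA.eigenvectorBasis k : Fin n → ℝ) ⬝ᵥ (hA.eigenvectorBasis l : Fin n → ℝ)
      = if k = l then 1 else 0 := by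
  have h := orthonormal_iff_ite.mp hA.eigenvectorBasis.orthonormal k l
  simpa [PiLp.inner_apply, RCLike.inner_apply, dotProduct, mul_comm] using h
end DotHelpers
section Core
variable {m : ℕ} {e f : ℝ}

lemma core_zero (hH : (Ttri (m+2) e f).IsHermitian) (s : ℝ) (hs : s = 1 ∨ s = -1)
    (he : 1 < |e|) (hf : 1 < |f|)
    (S : Finset (Fin (m+2))) (hS : ∀ k ∈ S, 2 < s * hH.eigenvalues k)
    (c : Fin (m+2) → ℝ)
    (h0 : 1 < s * e →
      (∑ k ∈ S, c k • (hH.eigenvectorBasis k : Fin (m+2) → ℝ)) 0 = 0)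
    (hl : 1 < s * f →
      (∑ k ∈ S, c k • (hH.eigenvectorBasis k : Fin (m+2) → ℝ)) (Fin.last (m+1)) = 0) :
    ∀ k ∈ S, c k = 0 := by
  set A := Ttri (m+2) e f with hA
  set v : Fin (m+2) → (Fin (m+2) → ℝ) := fun k => (hH.eigenvectorBasis k : Fin (m+2) → ℝ)
    with hv
  set μ : Fin (m+2) → ℝ := hH.eigenvalues with hμ
  set x : Fin (m+2) → ℝ := ∑ k ∈ S, c k • v k with hxdef
  have hdotv : ∀ k l, v k ⬝ᵥ v l = if k = l then (1:ℝ) else 0 := fun k l => eigen_dot A hH k l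
  have hxx : x ⬝ᵥ x = ∑ k ∈ S, (c k)^2 := by
    rw [hxdef, dot_sum_left]
    apply Finset.sum_congr rfl
    intro k hk
    rw [dot_sum_right]
    have : ∑ l ∈ S, c l * (v k ⬝ᵥ v l) = ∑ l ∈ S, (if k = l then c l else 0) := by
      apply Finset.sum_congr rfl
      intro l _
      rw [hdotv k l]
      split_ifs <;> ring
    rw [this, Finset.sum_ite_eq S k c, if_pos hk]
    ring
  have hAx : A *ᵥ x = ∑ k ∈ S, (c k * μ k) • v k := by
    rw [hxdef, mulVec_sum']
    apply Finset.sum_congr rfl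
    intro k _
    rw [← smul_smul]
    exact congrArg (fun y => c k • y) (hH.mulVec_eigenvectorBasis k)
  have hxAx : x ⬝ᵥ (A *ᵥ x) = ∑ k ∈ S, μ k * (c k)^2 := by
    rw [hAx, hxdef, dot_sum_left]
    apply Finset.sum_congr rfl
    intro k hk
    rw [dot_sum_right]
    have : ∑ l ∈ S, c l * μ l * (v k ⬝ᵥ v l) = ∑ l ∈ S, (if k = l then c l * μ l else 0) := by
      apply Finset.sum_congr rfl
      intro l _
      rw [hdotv k l]
      split_ifs <;> ring
    rw [this, Finset.sum_ite_eq S k (fun l => c l * μ l), if_pos hk]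
    ring
  by_contra hcon
  push_neg at hcon
  obtain ⟨k0, hk0S, hk0⟩ := hcon
  have hxne : x ≠ 0 := by
    intro hx0
    rw [hx0] at hxx
    simp only [zero_dotProduct] at hxx
    have h0' : ∀ k ∈ S, (c k)^2 = 0 := by
      intro k hk
      have hnn : ∀ k ∈ S, 0 ≤ (c k)^2 := fun k _ => sq_nonneg _
      exact (Finset.sum_eq_zero_iff_of_nonneg hnn).mp hxx.symm k hk
    exact hk0 (pow_eq_zero_iff (by norm_num)|>.mp (h0' k0 hk0S))
  have hquad := quad_lt (e := e) (f := f) s hs he hf x hxne h0 hl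
  have hsumsq : ∑ i : Fin (m+2), x i ^ 2 = x ⬝ᵥ x := by
    simp [dotProduct, sq]
  rw [hsumsq, hxx] at hquad
  have hlow : 2 * ∑ k ∈ S, (c k)^2 < s * (x ⬝ᵥ (A *ᵥ x)) := by
    rw [hxAx, Finset.mul_sum, Finset.mul_sum]
    apply Finset.sum_lt_sum
    · intro k hk
      have := hS k hk
      nlinarith [sq_nonneg (c k)]
    · refine ⟨k0, hk0S, ?_⟩
      have h1 := hS k0 hk0S
      have h2 : 0 < (c k0)^2 := by positivity
      nlinarith
  linarith
end Core
section Count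
variable {m : ℕ} {e f : ℝ}

lemma count_bound (hH : (Ttri (m+2) e f).IsHermitian) (s : ℝ) (hs : s = 1 ∨ s = -1)
    (he : 1 < |e|) (hf : 1 < |f|) :
    (Finset.univ.filter (fun k => 2 < s * hH.eigenvalues k)).card ≤
      ((if 1 < s * e then 1 else 0) + (if 1 < s * f then 1 else 0) : ℕ) := by
  classical
  set v : Fin (m+2) → (Fin (m+2) → ℝ) := fun k => (hH.eigenvectorBasis k : Fin (m+2) → ℝ)
    with hv
  set S := Finset.univ.filter (fun k => 2 < s * hH.eigenvalues k) with hSdef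
  have hS : ∀ k ∈ S, 2 < s * hH.eigenvalues k := fun k hk => (Finset.mem_filter.mp hk).2
  have hcore : ∀ c : {k // k ∈ S} → ℝ,
      (1 < s * e → ∑ k : {k // k ∈ S}, c k * v k.1 0 = 0) →
      (1 < s * f → ∑ k : {k // k ∈ S}, c k * v k.1 (Fin.last (m+1)) = 0) →
      ∀ k : {k // k ∈ S}, c k = 0 := by
    intro c hc0 hcl
    set c' : Fin (m+2) → ℝ := fun j => if h : j ∈ S then c ⟨j, h⟩ else 0 with hc'
    have hsum : ∀ w : Fin (m+2),
        (∑ k ∈ S, c' k • v k) w = ∑ k : {k // k ∈ S}, c k * v k.1 w := by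
      intro w
      rw [Finset.sum_apply, Finset.sum_coe_sort_eq_attach, ← Finset.sum_attach S
        (fun k => (c' k • v k) w)]
      apply Finset.sum_congr rfl
      intro k _
      simp only [Pi.smul_apply, smul_eq_mul, hc', dif_pos k.2]
    have hall := core_zero hH s hs he hf S hS c'
      (fun h => by rw [hsum]; exact hc0 h)
      (fun h => by rw [hsum]; exact hcl h)
    intro k
    have hk := hall k.1 k.2
    simpa [hc', dif_pos k.2] using hk
  by_cases he1 : 1 < s * e <;> by_cases hf1 : 1 < s * f
  · -- both: bound 2
    rw [if_pos he1, if_pos hf1]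
    have hli : LinearIndependent ℝ
        (fun k : {k // k ∈ S} => ((v k.1 0, v k.1 (Fin.last (m+1))) : ℝ × ℝ)) := by
      rw [Fintype.linearIndependent_iff]
      intro c hc
      have h1 : ∑ k : {k // k ∈ S}, c k * v k.1 0 = 0 := by
        have := congrArg Prod.fst hc
        simpa [Prod.fst_sum] using this
      have h2 : ∑ k : {k // k ∈ S}, c k * v k.1 (Fin.last (m+1)) = 0 := by
        have := congrArg Prod.snd hc
        simpa [Prod.snd_sum] using this
      exact hcore c (fun _ => h1) (fun _ => h2)
    have hcard := hli.fintype_card_le_finrank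
    have hfr : Module.finrank ℝ (ℝ × ℝ) = 2 := by
      rw [Module.finrank_prod, Module.finrank_self]
    rw [hfr, Fintype.card_coe] at hcard
    omega
  · rw [if_pos he1, if_neg hf1]
    have hli : LinearIndependent ℝ (fun k : {k // k ∈ S} => v k.1 0) := by
      rw [Fintype.linearIndependent_iff]
      intro c hc
      refine hcore c (fun _ => ?_) (fun h => absurd h hf1)
      simpa [smul_eq_mul] using hc
    have hcard := hli.fintype_card_le_finrank
    rw [Module.finrank_self, Fintype.card_coe] at hcard
    omega
  · rw [if_neg he1, if_pos hf1]
    have hli : LinearIndependent ℝ (fun k : {k // k ∈ S} => v k.1 (Fin.last (m+1))) := by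
      rw [Fintype.linearIndependent_iff]
      intro c hc
      refine hcore c (fun h => absurd h he1) (fun _ => ?_)
      simpa [smul_eq_mul] using hc
    have hcard := hli.fintype_card_le_finrank
    rw [Module.finrank_self, Fintype.card_coe] at hcard
    omega
  · rw [if_neg he1, if_neg hf1]
    have hempty : S = ∅ := by
      rcases S.eq_empty_or_nonempty with h | h
      · exact h
      · exfalso
        obtain ⟨k, hk⟩ := h
        have hone := core_zero hH s hs he hf ({k} : Finset (Fin (m+2)))
          (fun l hl => by rw [Finset.mem_singleton] at hl; exact hl ▸ hS k hk)
          (fun _ => 1)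
          (fun h' => absurd h' he1) (fun h' => absurd h' hf1) k (Finset.mem_singleton_self k)
        norm_num at hone
    simp [hempty]
end Count
/-- If `|ε| > 1` and `|φ| > 1`, then at least `n - 2` of the `n` eigenvalues of
`T_{n,ε,φ}` (counted with multiplicity, i.e. as the list of eigenvalues of the
Hermitian matrix) lie in `[-2, 2]`; equivalently, at most two lie outside. -/
theorem stmt5 (n : ℕ) (hn : 2 ≤ n) (e f : ℝ)
    (he : 1 < |e|) (hf : 1 < |f|)
    (hH : (Ttri n e f).IsHermitian) :
    n - 2 ≤ {k : Fin n | hH.eigenvalues k ∈ Set.Icc (-2 : ℝ) 2}.ncard ∧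
    {k : Fin n | hH.eigenvalues k ∉ Set.Icc (-2 : ℝ) 2}.ncard ≤ 2 := by
  obtain ⟨m, rfl⟩ : ∃ m, n = m + 2 := ⟨n - 2, by omega⟩
  have he' : 1 < e ∨ e < -1 := by
    rcases abs_cases e with ⟨h1, h2⟩ | ⟨h1, h2⟩
    · left; linarith
    · right; linarith
  have hf' : 1 < f ∨ f < -1 := by
    rcases abs_cases f with ⟨h1, h2⟩ | ⟨h1, h2⟩
    · left; linarith
    · right; linarith
  have hout : {k : Fin (m+2) | hH.eigenvalues k ∉ Set.Icc (-2 : ℝ) 2}.ncard ≤ 2 := by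
    have hset : {k : Fin (m+2) | hH.eigenvalues k ∉ Set.Icc (-2 : ℝ) 2}
        = ↑((Finset.univ.filter (fun k => 2 < 1 * hH.eigenvalues k)) ∪
            (Finset.univ.filter (fun k => 2 < (-1) * hH.eigenvalues k))) := by
      ext k
      simp only [Set.mem_setOf_eq, Set.mem_Icc, not_and_or, not_le, Finset.coe_union,
        Set.mem_union, Finset.mem_coe, Finset.mem_filter, Finset.mem_univ, true_and,
        one_mul, neg_one_mul]
      constructor
      · rintro (h | h)
        · right; linarith
        · left; linarith
      · rintro (h | h)
        · right; linarith
        · left; linarith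
    rw [hset, Set.ncard_coe_finset]
    have hb1 := count_bound hH 1 (Or.inl rfl) he hf
    have hb2 := count_bound hH (-1) (Or.inr rfl) he hf
    have hunion := Finset.card_union_le
      (Finset.univ.filter (fun k : Fin (m+2) => 2 < 1 * hH.eigenvalues k))
      (Finset.univ.filter (fun k : Fin (m+2) => 2 < (-1) * hH.eigenvalues k))
    have hbound : ((if 1 < 1 * e then 1 else 0) + (if 1 < 1 * f then 1 else 0) : ℕ)
        + ((if 1 < (-1) * e then 1 else 0) + (if 1 < (-1) * f then 1 else 0)) ≤ 2 := by
      simp only [one_mul, neg_one_mul]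
      rcases he' with h | h <;> rcases hf' with h1 | h1
      · rw [if_pos h, if_pos h1, if_neg (by linarith : ¬ (1:ℝ) < -e),
          if_neg (by linarith : ¬ (1:ℝ) < -f)]
      · rw [if_pos h, if_neg (by linarith : ¬ (1:ℝ) < f),
          if_neg (by linarith : ¬ (1:ℝ) < -e), if_pos (by linarith : (1:ℝ) < -f)]
      · rw [if_neg (by linarith : ¬ (1:ℝ) < e), if_pos h1,
          if_pos (by linarith : (1:ℝ) < -e), if_neg (by linarith : ¬ (1:ℝ) < -f)]
      · rw [if_neg (by linarith : ¬ (1:ℝ) < e), if_neg (by linarith : ¬ (1:ℝ) < f),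
          if_pos (by linarith : (1:ℝ) < -e), if_pos (by linarith : (1:ℝ) < -f)]
    omega
  refine ⟨?_, hout⟩
  have hcompl : {k : Fin (m+2) | hH.eigenvalues k ∈ Set.Icc (-2 : ℝ) 2}
      = {k : Fin (m+2) | hH.eigenvalues k ∉ Set.Icc (-2 : ℝ) 2}ᶜ := by
    ext k; simp
  have hsum := Set.ncard_add_ncard_compl
    {k : Fin (m+2) | hH.eigenvalues k ∉ Set.Icc (-2 : ℝ) 2}
  have hcard : Nat.card (Fin (m+2)) = m + 2 := by simp
  rw [hcompl]
  omega
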